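/- Let A ∈ SL₂(ℤ) be hyperbolic with eigenvalue ε, |ε| > 1, and let K = ℚ(ε). Then for every k ≥ 1, gcd(A^k - I)² · N > |N_{K/ℚ}(ε^k - 1)| for some fixed positive integer N independent of k, where N_{K/ℚ} denotes the field norm. Equivalently, |N_{K/ℚ}(ε^k - 1)| divides gcd(A^k - I)² times a bounded integer. -/

import Mathlib

open Polynomial

/-- The gcd of the entries of an integer matrix. -/
def matGcd {r : ℕ} (B : Matrix (Fin r) (Fin r) ℤ) : ℕ :=
  Finset.univ.gcd fun p : Fin r × Fin r => (B p.1 p.2).natAbs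

lemma charpoly_fin_two' (M : Matrix (Fin 2) (Fin 2) ℝ) :
    M.charpoly = X^2 - C M.trace * X + C M.det := by
  rw [Matrix.charpoly, Matrix.det_fin_two, Matrix.charmatrix_apply_eq, Matrix.charmatrix_apply_eq,
    Matrix.charmatrix_apply_ne _ _ _ (by decide), Matrix.charmatrix_apply_ne _ _ _ (by decide),
    Matrix.trace_fin_two, Matrix.det_fin_two]
  simp only [map_add, map_sub, map_mul]
  ring

theorem stmt_9 (A : Matrix (Fin 2) (Fin 2) ℤ) (hdet : A.det = 1)
    (ε : ℝ) (hε : 1 < |ε|)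
    (hchar : (A.map (Int.cast : ℤ → ℝ)).charpoly = (X - C ε) * (X - C ε⁻¹)) :
    ∃ N : ℕ, 0 < N ∧ ∀ k : ℕ, 1 ≤ k →
      |(ε ^ k - 1) * ((ε⁻¹) ^ k - 1)| < ((matGcd (A ^ k - 1) : ℝ)) ^ 2 * N := by
  have hε0 : ε ≠ 0 := by
    intro h; rw [h] at hε; norm_num at hε
  have hinv : ε * ε⁻¹ = 1 := mul_inv_cancel₀ hε0
  set t : ℤ := A.trace with htdef
  -- trace equation
  have htrmap : (A.map (Int.cast : ℤ → ℝ)).trace = (t : ℝ) := by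
    rw [htdef, Matrix.trace_fin_two, Matrix.trace_fin_two]
    simp [Matrix.map_apply]
  have hc : (X^2 - C ((t:ℝ)) * X + C ((A.map (Int.cast : ℤ → ℝ)).det) : ℝ[X])
      = X^2 - (C ε + C ε⁻¹) * X + C ε * C ε⁻¹ := by
    rw [← htrmap, ← charpoly_fin_two', hchar]; ring
  have ht : (t : ℝ) = ε + ε⁻¹ := by
    have h1 := congrArg (fun P : ℝ[X] => P.coeff 1) hc
    simp [coeff_X_pow, coeff_C, mul_comm] at h1
    linarith [h1]
  -- Cayley-Hamilton
  have hCH : A ^ 2 = t • A - 1 := by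
    have h := A.aeval_self_charpoly
    rw [show A.charpoly = X^2 - C A.trace * X + C A.det by
      rw [Matrix.charpoly, Matrix.det_fin_two, Matrix.charmatrix_apply_eq,
        Matrix.charmatrix_apply_eq,
        Matrix.charmatrix_apply_ne _ _ _ (by decide), Matrix.charmatrix_apply_ne _ _ _ (by decide),
        Matrix.trace_fin_two, Matrix.det_fin_two]
      simp only [map_add, map_sub, map_mul]
      ring] at h
    rw [hdet] at h
    simp only [map_add, map_sub, map_mul, aeval_X, aeval_C, map_pow, map_one] at h
    have : A ^ 2 - (algebraMap ℤ _) t * A + 1 = 0 := by simpa using h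
    have halg : ((algebraMap ℤ (Matrix (Fin 2) (Fin 2) ℤ)) t) * A = t • A := by
      rw [Algebra.algebraMap_eq_smul_one, smul_mul_assoc, one_mul]
    rw [halg] at this
    linear_combination (norm := abel) this
  have hε2 : ε ^ 2 = (t:ℝ) * ε - 1 := by
    rw [ht]; linear_combination -hinv
  have hεi2 : (ε⁻¹ : ℝ) ^ 2 = (t:ℝ) * ε⁻¹ - 1 := by
    rw [ht]; linear_combination -hinv
  -- main recursion
  have main : ∀ k : ℕ, ∃ p q : ℤ, A ^ k = p • A + q • (1 : Matrix (Fin 2) (Fin 2) ℤ) ∧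
      ε ^ k = p * ε + q ∧ (ε⁻¹) ^ k = p * ε⁻¹ + q := by
    intro k
    induction k with
    | zero => exact ⟨0, 1, by simp, by simp, by simp⟩
    | succ k ih =>
      obtain ⟨p, q, hAk, hek, heik⟩ := ih
      refine ⟨p * t + q, -p, ?_, ?_, ?_⟩
      · rw [pow_succ, hAk, add_mul, smul_mul_assoc, smul_mul_assoc, one_mul,
          show A * A = A ^ 2 by rw [sq], hCH]
        rw [smul_sub, smul_smul]
        module
      · rw [pow_succ, hek]
        push_cast
        linear_combination (p : ℝ) * hε2
      · rw [pow_succ, heik]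
        push_cast
        linear_combination (p : ℝ) * hεi2
  -- the bound N
  have hε2gt : 1 < ε ^ 2 := by
    have := sq_abs ε
    nlinarith
  have ht4R : 4 < (t : ℝ) ^ 2 := by
    have hne : ε - ε⁻¹ ≠ 0 := by
      intro h
      have : ε ^ 2 = 1 := by
        have h' : ε = ε⁻¹ := by linarith [sub_eq_zero.mp h]
        calc ε ^ 2 = ε * ε := sq ε
        _ = ε * ε⁻¹ := by rw [← h']
        _ = 1 := hinv
      linarith
    have h1 : (t:ℝ)^2 - 4 = (ε - ε⁻¹)^2 := by
      rw [ht]; linear_combination 4*hinv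
    nlinarith [sq_pos_of_ne_zero hne]
  have ht4 : (0:ℤ) < t ^ 2 - 4 := by
    have : (4:ℝ) < ((t^2 : ℤ) : ℝ) := by push_cast; exact ht4R
    exact_mod_cast sub_pos.mpr (by exact_mod_cast this)
  refine ⟨(t^2 - 4).natAbs + 1, Nat.succ_pos _, ?_⟩
  intro k hk
  obtain ⟨p, q, hAk, hek, heik⟩ := main k
  -- determinant identity H
  have hAfin : A 0 0 * A 1 1 - A 0 1 * A 1 0 = 1 := by
    rw [← Matrix.det_fin_two]; exact hdet
  have htr : t = A 0 0 + A 1 1 := Matrix.trace_fin_two A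
  have H : p^2 + p*q*t + q^2 = 1 := by
    have hd : (A ^ k).det = 1 := by rw [Matrix.det_pow, hdet, one_pow]
    rw [hAk, Matrix.det_fin_two] at hd
    simp only [Matrix.add_apply, Matrix.smul_apply, Matrix.one_apply_eq, smul_eq_mul,
      Matrix.one_apply_ne (show (0:Fin 2) ≠ 1 by decide),
      Matrix.one_apply_ne (show (1:Fin 2) ≠ 0 by decide), mul_zero, add_zero, mul_one] at hd
    linear_combination hd - (p^2) * hAfin + (p*q) * htr
  -- n and its real value
  set n : ℤ := p^2 + p*(q-1)*t + (q-1)^2 with hndef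
  have hn2 : n = 2 - p*t - 2*q := by linear_combination H
  have hnR : (n : ℝ) = (ε ^ k - 1) * ((ε⁻¹) ^ k - 1) := by
    rw [hek, heik, hndef]
    push_cast
    linear_combination (-(p:ℝ)^2) * hinv + ((p:ℝ)*((q:ℝ)-1)) * ht
  -- n ≠ 0
  have hεk1 : 1 < |ε| ^ k := one_lt_pow₀ hε (by omega)
  have hεik1 : |ε⁻¹| ^ k < 1 := by
    have h1 : |ε⁻¹| < 1 := by rw [abs_inv]; rw [inv_lt_one_iff₀]; right; exact hε
    exact pow_lt_one₀ (abs_nonneg _) h1 (by omega)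
  have hne0 : n ≠ 0 := by
    intro h
    have h0 : (ε ^ k - 1) * ((ε⁻¹) ^ k - 1) = 0 := by rw [← hnR, h]; simp
    rcases mul_eq_zero.mp h0 with h | h
    · have h' : ε ^ k = 1 := by linarith [sub_eq_zero.mp h]
      rw [← abs_pow] at hεk1; rw [h'] at hεk1; simp at hεk1
    · have h' : (ε⁻¹) ^ k = 1 := by linarith [sub_eq_zero.mp h]
      rw [← abs_pow] at hεik1; rw [h'] at hεik1; simp at hεik1
  -- p ≠ 0
  have hp0 : p ≠ 0 := by
    intro h
    rw [h] at hek heik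
    push_cast at hek heik
    rw [zero_mul, zero_add] at hek heik
    have h1 : |ε| ^ k = |(q:ℝ)| := by rw [← abs_pow, hek]
    have h2 : |ε⁻¹| ^ k = |(q:ℝ)| := by rw [← abs_pow, heik]
    linarith
  -- gcd decomposition
  set g : ℕ := Int.gcd p (q - 1) with hgdef
  have hgpos : 0 < g := Int.gcd_pos_iff.mpr (Or.inl hp0)
  have hgz : (g : ℤ) ≠ 0 := by exact_mod_cast hgpos.ne'
  have hgp : (g : ℤ) ∣ p := Int.gcd_dvd_left p (q - 1)
  have hgq : (g : ℤ) ∣ (q - 1) := Int.gcd_dvd_right p (q - 1)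
  set u : ℤ := p / g with hudef
  set v : ℤ := (q - 1) / g with hvdef
  have hpu : p = g * u := (Int.mul_ediv_cancel' hgp).symm
  have hqv : q - 1 = g * v := (Int.mul_ediv_cancel' hgq).symm
  have huv : Int.gcd u v = 1 := Int.gcd_div_gcd_div_gcd hgpos
  have hu0 : u ≠ 0 := by
    intro h; apply hp0; rw [hpu, h, mul_zero]
  set e : ℤ := u^2 + u*v*t + v^2 with hedef
  have hne : n = g^2 * e := by rw [hndef, hedef, hpu, hqv]; ring
  have he0 : e ≠ 0 := by
    intro h; apply hne0; rw [hne, h, mul_zero]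
  -- key: g * e = -(u*t + 2*v)
  have hge : (g:ℤ) * e = -(u*t + 2*v) := by
    apply mul_left_cancel₀ hgz
    have : (g:ℤ)^2 * e = 2 - p*t - 2*q := by rw [← hne]; exact hn2
    have hq' : q = g * v + 1 := by linarith [hqv]
    rw [hq'] at this
    rw [hpu] at this
    linear_combination this
  -- e ∣ t^2 - 4
  have hdvd1 : e ∣ u^2 * (t^2 - 4) := by
    refine ⟨(g:ℤ)^2 * e - 4, ?_⟩
    have h2 : ((g:ℤ)*e)^2 = (u*t+2*v)^2 := by rw [hge]; ring
    linear_combination -h2 + 4*hedef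
  have hco : IsCoprime u v := Int.isCoprime_iff_gcd_eq_one.mpr huv
  have hcoe : IsCoprime e (u^2) := by
    have c1 : IsCoprime (v^2) u := (hco.symm).pow_left
    have c2 : IsCoprime (v^2 + u * (u + v*t)) u := c1.add_mul_left_left _
    have : e = v^2 + u * (u + v*t) := by rw [hedef]; ring
    rw [this]
    exact c2.pow_right
  have hdvd2 : e ∣ t^2 - 4 := hcoe.dvd_of_dvd_mul_left hdvd1
  have heabs : e.natAbs ≤ (t^2 - 4).natAbs := by
    apply Nat.le_of_dvd
    · exact Int.natAbs_pos.mpr ht4.ne'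
    · exact Int.natAbs_dvd_natAbs.mpr hdvd2
  -- g divides matGcd
  set d : ℕ := matGcd (A ^ k - 1) with hddef
  have hentry : ∀ i j : Fin 2, (A ^ k - 1) i j
      = p * A i j + (q - 1) * (1 : Matrix (Fin 2) (Fin 2) ℤ) i j := by
    intro i j
    rw [hAk]
    simp only [Matrix.sub_apply, Matrix.add_apply, Matrix.smul_apply, smul_eq_mul]
    ring
  have hgd : g ∣ d := by
    apply Finset.dvd_gcd
    intro pr _
    have hint : (g : ℤ) ∣ (A ^ k - 1) pr.1 pr.2 := by
      rw [hentry]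
      exact dvd_add (hgp.mul_right _) (hgq.mul_right _)
    have := Int.natAbs_dvd_natAbs.mpr hint
    simpa using this
  have hd0 : 0 < d := by
    rcases Nat.eq_zero_or_pos d with h | h
    · exfalso
      have hzero : ∀ pr ∈ (Finset.univ : Finset (Fin 2 × Fin 2)),
          ((A ^ k - 1) pr.1 pr.2).natAbs = 0 := Finset.gcd_eq_zero_iff.mp h
      have hA1 : A ^ k = 1 := by
        ext i j
        have := hzero (i, j) (Finset.mem_univ _)
        have h2 : (A ^ k - 1) i j = 0 := Int.natAbs_eq_zero.mp this
        have h3 := sub_eq_zero.mp (by simpa [Matrix.sub_apply] using h2)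
        exact h3
      -- trace gives p*t + 2*q = 2
      have htrace : p * t + 2 * q = 2 := by
        have h5 := congrArg Matrix.trace (hAk.symm.trans hA1)
        simp only [Matrix.trace_add, Matrix.trace_smul, Matrix.trace_one, smul_eq_mul,
          Fintype.card_fin, Nat.cast_ofNat] at h5
        linarith
      apply hne0
      rw [hn2]
      linarith
    · exact h
  have hgled : g ≤ d := Nat.le_of_dvd hd0 hgd
  -- final inequality over ℕ
  have hnat : n.natAbs < d^2 * ((t^2 - 4).natAbs + 1) := by
    have h1 : n.natAbs = g^2 * e.natAbs := by
      rw [hne]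
      simp [Int.natAbs_mul, Int.natAbs_pow]
    have h2 : g^2 * e.natAbs ≤ d^2 * (t^2-4).natAbs :=
      Nat.mul_le_mul (Nat.pow_le_pow_left hgled 2) heabs
    have hdp : 0 < d^2 := Nat.pow_pos hd0
    have h3 : d^2 * (t^2-4).natAbs < d^2 * ((t^2-4).natAbs + 1) :=
      mul_lt_mul_of_pos_left (Nat.lt_succ_self _) hdp
    rw [h1]
    exact lt_of_le_of_lt h2 h3
  -- cast to ℝ
  rw [← hnR]
  have habs : |(n:ℝ)| = (n.natAbs : ℝ) := by
    rw [@Nat.cast_natAbs ℝ _ n, Int.cast_abs]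
  rw [habs]
  exact_mod_cast hnat
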